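/- Let G be a nontrivial gyrogroup, let Ǧ = G \ {e}, and let GYR(Ǧ) = {γ|_Ǧ : γ ∈ GYR(G)} (well-defined since every element of GYR(G) fixes e). If the geometry (Ǧ, GYR(Ǧ)) is not transitive, then the geometry (G, Γ_m) is not n-transitive for all n ≥ 2. -/

import Mathlib

/-- A gyrogroup: a set with a binary operation `op`, a left identity `e`, left inverses
`inv`, and gyroautomorphisms `gyr a b` (bijective and operation-preserving) satisfying the
left gyroassociative law and the left loop property. -/
class Gyrogroup (G : Type*) where
  /-- the gyrogroup operation `⊕` -/
  op : G → G → G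
  /-- the identity element -/
  e : G
  /-- the inverse `⊖a` -/
  inv : G → G
  /-- (G1) `e ⊕ a = a` -/
  op_e : ∀ a : G, op e a = a
  /-- (G2) `⊖a ⊕ a = e` -/
  op_inv : ∀ a : G, op (inv a) a = e
  /-- the gyroautomorphism `gyr[a, b]` -/
  gyr : G → G → G → G
  /-- (G3) `gyr[a, b]` is bijective -/
  gyr_bijective : ∀ a b : G, Function.Bijective (gyr a b)
  /-- (G3) `gyr[a, b]` preserves the operation -/
  gyr_op : ∀ a b x y : G, gyr a b (op x y) = op (gyr a b x) (gyr a b y)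
  /-- (G3) the left gyroassociative law -/
  gyrassoc : ∀ a b c : G, op a (op b c) = op (op a b) (gyr a b c)
  /-- (G4) the left loop property -/
  loop : ∀ a b : G, gyr (op a b) b = gyr a b

namespace Gyrogroup

variable {G : Type*} [Gyrogroup G]

theorem key (x z : G) : op (inv x) (op x z) = gyr (inv x) x z := by
  rw [gyrassoc, op_inv, op_e]

theorem L_injective (x : G) : Function.Injective (op x) := by
  intro z₁ z₂ h
  have h1 : gyr (inv x) x z₁ = gyr (inv x) x z₂ := by
    rw [← key, ← key, h]
  exact (gyr_bijective (inv x) x).1 h1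

theorem L_surjective (x : G) : Function.Surjective (op x) := by
  intro w
  obtain ⟨z, hz⟩ := (gyr_bijective (inv x) x).2 (op (inv x) w)
  exact ⟨z, L_injective (inv x) (by rw [key, hz])⟩

theorem L_bijective (x : G) : Function.Bijective (op x) :=
  ⟨L_injective x, L_surjective x⟩

/-- The left gyrotranslation `L_a : x ↦ a ⊕ x` as a permutation of `G`. -/
noncomputable def Lperm (a : G) : Equiv.Perm G := Equiv.ofBijective (op a) (L_bijective a)

/-- The gyroautomorphism `gyr[a, b]` as a permutation of `G`. -/
noncomputable def gyrPerm (a b : G) : Equiv.Perm G := Equiv.ofBijective (gyr a b) (gyr_bijective a b)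

/-- `GYR(G)`: the subgroup of `Sym(G)` generated by all gyroautomorphisms. -/
def GYR (G : Type*) [Gyrogroup G] : Subgroup (Equiv.Perm G) :=
  Subgroup.closure {π : Equiv.Perm G | ∃ a b : G, π = gyrPerm a b}

/-- `Γₘ = {L_a ∘ γ : a ∈ G, γ ∈ GYR(G)}`, a subgroup of `Sym(G)`. -/
def Γm (G : Type*) [Gyrogroup G] : Set (Equiv.Perm G) :=
  {T : Equiv.Perm G | ∃ a : G, ∃ γ ∈ GYR G, T = Lperm a * γ}

end Gyrogroup

/-- The geometry `(S, 𝒯)` is `n`-transitive: `S` has at least `n` distinct elements, and any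
`n` pairwise distinct points can be mapped to any `n` pairwise distinct points by a single
transformation of `𝒯`. -/
def IsNTransitive {S : Type*} (𝒯 : Set (Equiv.Perm S)) (n : ℕ) : Prop :=
  (∃ x : Fin n → S, Function.Injective x) ∧
    ∀ x y : Fin n → S, Function.Injective x → Function.Injective y →
      ∃ t ∈ 𝒯, ∀ i, t (x i) = y i

namespace Gyrogroup

variable {G : Type*} [Gyrogroup G]

theorem gyr_e_left (b c : G) : gyr e b c = c := by
  apply L_injective b
  have := gyrassoc e b c
  rw [op_e, op_e] at this
  exact this.symm

theorem gyr_fix_e (a b : G) : gyr a b e = e := by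
  set u := gyr a b e with hu
  have huu : u = op u u := by
    rw [hu]
    conv_lhs => rw [show (e : G) = op e e from (op_e e).symm]
    rw [gyr_op]
  have h1 : op (inv u) (op u u) = op (inv u) u := by rw [← huu]
  have hl : gyr e u = gyr (inv u) u := by rw [← op_inv u, loop]
  have h2 : op (inv u) (op u u) = gyr e u u := by
    rw [gyrassoc, op_inv, op_e, hl]
  have h3 := h1.symm.trans h2
  rw [op_inv, gyr_e_left] at h3
  exact h3.symm

theorem op_e_right (a : G) : op a e = a := by
  apply L_injective (inv a)
  rw [gyrassoc, gyr_fix_e, op_inv, op_e]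

theorem GYR_fix_e {γ : Equiv.Perm G} (hγ : γ ∈ GYR G) : γ e = e := by
  induction hγ using Subgroup.closure_induction with
  | mem π hπ =>
    obtain ⟨a, b, rfl⟩ := hπ
    exact gyr_fix_e a b
  | one => rfl
  | mul π σ _ _ hπ hσ => simp [Equiv.Perm.mul_apply, hσ, hπ]
  | inv π _ hπ =>
    have : π (π⁻¹ e) = π e := by rw [← Equiv.Perm.mul_apply, mul_inv_cancel, Equiv.Perm.one_apply, hπ]
    exact π.injective this

theorem exists_extend {k : ℕ} (u : Fin (k + 2) → G) (hu : Function.Injective u)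
    (v w : G) (hvw : v ≠ w) :
    ∃ a : Fin (k + 2) → G, Function.Injective a ∧ a 0 = v ∧ a 1 = w := by
  classical
  set s : Finset G := Finset.image u Finset.univ with hs
  have hscard : s.card = k + 2 := by
    rw [hs, Finset.card_image_of_injective _ hu, Finset.card_univ, Fintype.card_fin]
  set t : Finset G := s \ {v, w} with ht
  have htcard : k ≤ t.card := by
    have h1 : ({v, w} : Finset G).card ≤ 2 := Finset.card_insert_le _ _ |>.trans (by simp)
    have h2 : s.card - ({v, w} : Finset G).card ≤ t.card := Finset.le_card_sdiff _ _
    omega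
  obtain ⟨t', ht's, ht'card⟩ := Finset.exists_subset_card_eq htcard
  set g : Fin k → G := fun i => ((t'.equivFin.symm (ht'card ▸ i)) : G) with hg
  have hginj : Function.Injective g := by
    intro i j hij
    have := t'.equivFin.symm.injective (Subtype.val_injective hij)
    subst ht'card
    exact this
  have hgmem : ∀ i, g i ∈ t := fun i => ht's (t'.equivFin.symm _).2
  have hgv : v ∉ Set.range g := by
    rintro ⟨i, rfl⟩
    have := hgmem i
    rw [ht, Finset.mem_sdiff] at this
    exact this.2 (by simp)
  have hgw : w ∉ Set.range g := by
    rintro ⟨i, rfl⟩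
    have := hgmem i
    rw [ht, Finset.mem_sdiff] at this
    exact this.2 (by simp)
  refine ⟨Fin.cons v (Fin.cons w g), ?_, Fin.cons_zero _ _, ?_⟩
  · rw [Fin.cons_injective_iff]
    constructor
    · rw [Fin.range_cons]
      rintro (rfl | hr)
      · exact hvw rfl
      · exact hgv hr
    · rw [Fin.cons_injective_iff]
      exact ⟨hgw, hginj⟩
  · have h1 : (1 : Fin (k + 2)) = Fin.succ 0 := rfl
    rw [h1, Fin.cons_succ, Fin.cons_zero]

end Gyrogroup

open Gyrogroup in
/-- Let `G` be a nontrivial gyrogroup and let `Ǧ = G \ {e}`. If the geometry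
`(Ǧ, GYR(Ǧ))` of restrictions of elements of `GYR(G)` is not transitive, then `(G, Γₘ)` is
not `n`-transitive for any `n ≥ 2`. -/
theorem stmt12 {G : Type*} [Gyrogroup G] (hnt : ∃ x : G, x ≠ e)
    (h : ¬ ∀ x y : G, x ≠ e → y ≠ e → ∃ γ ∈ GYR G, γ x = y) :
    ∀ n : ℕ, 2 ≤ n → ¬ IsNTransitive (Γm G) n := by
  push_neg at h
  obtain ⟨x0, y0, hx0, hy0, hno⟩ := h
  intro n hn ⟨⟨u, hu⟩, htrans⟩
  obtain ⟨k, rfl⟩ : ∃ k, n = k + 2 := ⟨n - 2, by omega⟩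
  obtain ⟨a, ha, ha0, ha1⟩ := exists_extend u hu e x0 (Ne.symm hx0)
  obtain ⟨b, hb, hb0, hb1⟩ := exists_extend u hu e y0 (Ne.symm hy0)
  obtain ⟨T, hT, hTab⟩ := htrans a b ha hb
  obtain ⟨c, γ, hγ, rfl⟩ := hT
  have hγe : γ e = e := GYR_fix_e hγ
  have hL : ∀ d x : G, Lperm d x = op d x := fun _ _ => rfl
  have hce : c = e := by
    have := hTab 0
    rw [ha0, hb0, Equiv.Perm.mul_apply, hγe, hL, op_e_right] at this
    exact this
  have := hTab 1
  rw [ha1, hb1, Equiv.Perm.mul_apply, hce, hL, op_e] at this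
  exact hno γ hγ this
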